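/- arXiv:2205.08761 — 6 statements merged into one kernel-verified Lean document; each statement's English description precedes it below -/
import Mathlib

section
/- For every real a with 0 ≤ a ≤ 1 and every real r ≥ 0, one has a·|log a| ≤ exp(−r²) + 2·a·r², where a·|log a| is interpreted as 0 when a = 0. -/
open Real

/-- For `0 ≤ a ≤ 1` and `r ≥ 0`, `a |log a| ≤ e^{-r²} + 2 a r²`
(with the convention `0 · log 0 = 0`, automatic since `Real.log 0 = 0`). -/
theorem small_entropy_bound (a r : ℝ) (ha0 : 0 ≤ a) (ha1 : a ≤ 1) (hr : 0 ≤ r) :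
    a * |Real.log a| ≤ Real.exp (-r ^ 2) + 2 * a * r ^ 2 := by
  rcases eq_or_lt_of_le ha0 with h0 | hpos
  · simp [← h0]
    positivity
  · have hlog : Real.log a ≤ 0 := Real.log_nonpos ha0 ha1
    rw [abs_of_nonpos hlog]
    set c : ℝ := -1 - 2 * r ^ 2 with hc
    have h1 : Real.log (Real.exp c / a) ≤ Real.exp c / a - 1 :=
      Real.log_le_sub_one_of_pos (by positivity)
    rw [Real.log_div (Real.exp_ne_zero c) (ne_of_gt hpos), Real.log_exp] at h1
    -- c - log a ≤ exp c / a - 1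
    have h2 : -Real.log a ≤ Real.exp c / a + 2 * r ^ 2 := by
      rw [hc] at h1; linarith
    have h3 : a * (-Real.log a) ≤ Real.exp c + 2 * a * r ^ 2 := by
      have := mul_le_mul_of_nonneg_left h2 (le_of_lt hpos)
      rw [mul_add, mul_div_cancel₀ _ (ne_of_gt hpos)] at this
      linarith
    have h4 : Real.exp c ≤ Real.exp (-r ^ 2) :=
      Real.exp_le_exp.mpr (by rw [hc]; nlinarith)
    linarith
end

section
/- Let M0 > 8π, m0 > 0 and I0 ≥ 0, and define m(t) := M0/(1 + ((M0 - m0)/m0)·exp(-M0·t)) and m₂(t) := m(t)·( 4t − (1/(2π))·log( (m0·exp(M0·t) + M0 − m0)/M0 ) + I0/m0 ) for t ≥ 0. Then there exists T > 0 such that m₂(T) < 0. -/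
open Real

/-- For `M0 > 8π`, the explicit second moment
`m₂(t) = m(t)(4t - (1/2π) log((m0 e^{M0 t} + M0 - m0)/M0) + I0/m0)`
becomes negative in finite time. -/
theorem second_moment_negative_supercritical (M0 m0 I0 : ℝ)
    (hM0 : 8 * π < M0) (hm0 : 0 < m0) (hI0 : 0 ≤ I0)
    (m m2 : ℝ → ℝ)
    (hm : ∀ t, m t = M0 / (1 + ((M0 - m0) / m0) * Real.exp (-M0 * t)))
    (hm2 : ∀ t, m2 t = m t * (4 * t -
      (1 / (2 * π)) * Real.log ((m0 * Real.exp (M0 * t) + M0 - m0) / M0) + I0 / m0)) :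
    ∃ T > (0 : ℝ), m2 T < 0 := by
  have hπ : 0 < π := Real.pi_pos
  have hM0pos : 0 < M0 := by nlinarith
  set c : ℝ := min m0 M0 with hc
  have hcpos : 0 < c := lt_min hm0 hM0pos
  have hcm0 : c ≤ m0 := min_le_left _ _
  have hcM0 : c ≤ M0 := min_le_right _ _
  set K : ℝ := I0 / m0 + 1 - Real.log (c / M0) / (2 * π) with hK
  set δ : ℝ := M0 / (2 * π) - 4 with hδdef
  have hδ : 0 < δ := by
    rw [hδdef, sub_pos, lt_div_iff₀ (by positivity)]
    linarith
  set T : ℝ := max 1 (K / δ) with hT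
  have hT1 : (1 : ℝ) ≤ T := le_max_left _ _
  have hT0 : 0 < T := lt_of_lt_of_le one_pos hT1
  have hTK : K ≤ δ * T := by
    have h1 : K / δ ≤ T := le_max_right _ _
    calc K = δ * (K / δ) := by field_simp
    _ ≤ δ * T := by exact mul_le_mul_of_nonneg_left h1 hδ.le
  refine ⟨T, hT0, ?_⟩
  set E : ℝ := Real.exp (M0 * T) with hE
  have hEpos : 0 < E := Real.exp_pos _
  have hE1 : 1 ≤ E := by
    rw [hE]
    exact Real.one_le_exp (by positivity)
  set e : ℝ := Real.exp (-M0 * T) with he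
  have hepos : 0 < e := Real.exp_pos _
  have he1 : e ≤ 1 := by
    rw [he]
    calc Real.exp (-M0 * T) ≤ Real.exp 0 := Real.exp_le_exp.mpr (by nlinarith)
    _ = 1 := Real.exp_zero
  clear_value c K δ T E e
  -- positivity of m T
  have hden : 0 < 1 + (M0 - m0) / m0 * e := by
    have h1 : (0:ℝ) < m0 + (M0 - m0) * e := by nlinarith
    have h2 : 1 + (M0 - m0) / m0 * e = (m0 + (M0 - m0) * e) / m0 := by
      field_simp
    rw [h2]
    positivity
  have hmpos : 0 < m T := by
    rw [hm T, ← he]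
    exact div_pos hM0pos hden
  -- lower bound on A := m0 * E + M0 - m0
  have hA : E * c ≤ m0 * E + M0 - m0 := by
    nlinarith [mul_nonneg (sub_nonneg.2 hcm0) (sub_nonneg.2 hE1)]
  have hApos : 0 < m0 * E + M0 - m0 := lt_of_lt_of_le (by positivity) hA
  have hA' : E * (c / M0) ≤ (m0 * E + M0 - m0) / M0 := by
    rw [mul_div_assoc'] ; exact div_le_div_of_nonneg_right hA hM0pos.le
  have hL : M0 * T + Real.log (c / M0) ≤ Real.log ((m0 * E + M0 - m0) / M0) := by
    have h1 : Real.log (E * (c / M0)) ≤ Real.log ((m0 * E + M0 - m0) / M0) :=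
      Real.log_le_log (by positivity) hA'
    have h2 : Real.log (E * (c / M0)) = M0 * T + Real.log (c / M0) := by
      rw [Real.log_mul (ne_of_gt hEpos) (by positivity), hE, Real.log_exp]
    linarith
  -- the bracket is ≤ -1
  have hbr : 4 * T - (1 / (2 * π)) * Real.log ((m0 * E + M0 - m0) / M0) + I0 / m0 ≤ -1 := by
    have h2 : (1 / (2 * π)) * (M0 * T + Real.log (c / M0)) ≤
        (1 / (2 * π)) * Real.log ((m0 * E + M0 - m0) / M0) :=
      mul_le_mul_of_nonneg_left hL (by positivity)
    have h3 : 4 * T - (1 / (2 * π)) * (M0 * T + Real.log (c / M0)) + I0 / m0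
        = K - 1 - δ * T := by
      rw [hK, hδdef]; field_simp; ring
    nlinarith [h2, h3, hTK]
  rw [hm2 T, ← hE]
  exact mul_neg_of_pos_of_neg hmpos (by linarith)
end

section
/- Let 0 < M0 < 8π < m0 and let I0 be a real number with 0 ≤ I0 < C(M0,m0), where C(M0,m0) := −((8π − M0)·m0/(2·M0·π))·log( (m0 − M0)/(8π − M0) ) + (4·m0/M0)·log( m0/(8π) ). Define h(t) := 4t − (1/(2π))·log( (m0·exp(M0·t) + M0 − m0)/M0 ) + I0/m0. Then there exists t > 0 such that h(t) < 0. -/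
open Real

/-- For `M0 < 8π < m0` and initial second moment `I0 < C(M0, m0)`, the normalized
second moment `h` becomes negative in finite time. -/
theorem normalized_second_moment_negative (M0 m0 I0 : ℝ)
    (hM0 : 0 < M0) (hM08 : M0 < 8 * π) (hm0 : 8 * π < m0)
    (hI0 : 0 ≤ I0)
    (hI0C : I0 < -((8 * π - M0) * m0 / (2 * M0 * π)) * Real.log ((m0 - M0) / (8 * π - M0)) +
      (4 * m0 / M0) * Real.log (m0 / (8 * π)))
    (h : ℝ → ℝ)
    (hh : ∀ t, h t = 4 * t -
      (1 / (2 * π)) * Real.log ((m0 * Real.exp (M0 * t) + M0 - m0) / M0) + I0 / m0) :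
    ∃ t > (0 : ℝ), h t < 0 := by
  have hπ : (0:ℝ) < π := Real.pi_pos
  have h8M : (0:ℝ) < 8 * π - M0 := by linarith
  have hmM : (0:ℝ) < m0 - M0 := by linarith
  have hm0pos : (0:ℝ) < m0 := by linarith
  set A : ℝ := (m0 - M0) / (8 * π - M0) with hA
  have hApos : 0 < A := div_pos hmM h8M
  set E : ℝ := A * (8 * π / m0) with hE
  have hEpos : 0 < E := mul_pos hApos (div_pos (by linarith) hm0pos)
  have hE1 : 1 < E := by
    have hEeq : E = (8 * π * (m0 - M0)) / ((8 * π - M0) * m0) := by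
      rw [hE, hA]; field_simp
    rw [hEeq, lt_div_iff₀ (by positivity)]
    nlinarith
  set t : ℝ := Real.log E / M0 with ht
  have htpos : 0 < t := div_pos (Real.log_pos hE1) hM0
  refine ⟨t, htpos, ?_⟩
  have hexp : Real.exp (M0 * t) = E := by
    rw [ht, mul_div_cancel₀ _ (ne_of_gt hM0), Real.exp_log hEpos]
  have harg : (m0 * Real.exp (M0 * t) + M0 - m0) / M0 = A := by
    rw [hexp, hE, hA]
    field_simp
    ring
  have hlogE : Real.log E = Real.log A - Real.log (m0 / (8 * π)) := by
    rw [hE, Real.log_mul (ne_of_gt hApos) (by positivity),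
      Real.log_div (by positivity) (ne_of_gt hm0pos),
      Real.log_div (ne_of_gt hm0pos) (by positivity)]
    ring
  rw [hh, harg, ht, hlogE]
  set LA := Real.log A
  set LB := Real.log (m0 / (8 * π))
  have h2 : (0:ℝ) < 2 * M0 * π * m0 := by positivity
  have hmul := mul_lt_mul_of_pos_left hI0C (by positivity : (0:ℝ) < 2 * M0 * π)
  have hmul' : 2 * M0 * π * I0 < -((8 * π - M0) * m0) * LA + 8 * π * m0 * LB := by
    have e1 : 2 * M0 * π * (-((8 * π - M0) * m0 / (2 * M0 * π)) * LA + 4 * m0 / M0 * LB)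
        = -((8 * π - M0) * m0) * LA + 8 * π * m0 * LB := by
      field_simp
      ring
    linarith [e1 ▸ hmul]
  rw [show (4 * ((LA - LB) / M0) - 1 / (2 * π) * LA + I0 / m0)
      = (8 * π * m0 * (LA - LB) - M0 * m0 * LA + 2 * M0 * π * I0) / (2 * M0 * π * m0) by
    field_simp
    ring]
  apply div_neg_of_neg_of_pos _ h2
  nlinarith [hmul']
end

section
/- Let M0 > 0, λ0 > 0 and 0 < μ < 1 satisfy μ·8π/M0 > 1. Set A := 8π·μ/M0, κ := (M0/(μ·π))·(1 − μ)·(A − 1), λ(t) := λ0 + κ·t, R(t) := sqrt( λ(t)/(A − 1) ), and N(t,r) := 8π·μ·r²/(M0·(r² + λ(t))). Then for every t ≥ 0, every r with 0 < r ≤ R(t), and every real m with 0 < m ≤ M0, one has ∂_t N(t,r) − r·∂_r( (∂_r N(t,r))/r ) − (m/(2π·r))·(∂_r N(t,r))·N(t,r) ≥ 0; that is, N is a supersolution of the radial cumulated-mass equation whenever the time-dependent mass m(t) stays below M0. -/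
open Real

set_option maxHeartbeats 1000000 in
/-- The function `N(t,r) = 8πμ r²/(M0 (r² + λ(t)))` with `λ(t) = λ0 + κ t`,
`κ = (M0/(μπ))(1-μ)(A-1)`, `A = 8πμ/M0 > 1`, is a supersolution of the radial
cumulated-mass equation on `0 < r ≤ R(t)` whenever the time-dependent mass
coefficient `m` satisfies `0 < m ≤ M0`. -/
theorem supersolution_radial_cumulated_mass (M0 lam0 mu : ℝ)
    (hM0 : 0 < M0) (hlam0 : 0 < lam0) (hmu0 : 0 < mu) (hmu1 : mu < 1)
    (hthr : 1 < mu * 8 * π / M0)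
    (A κ : ℝ) (hA : A = 8 * π * mu / M0)
    (hκ : κ = M0 / (mu * π) * (1 - mu) * (A - 1))
    (lam R : ℝ → ℝ)
    (hlam : ∀ t, lam t = lam0 + κ * t)
    (hR : ∀ t, R t = Real.sqrt (lam t / (A - 1)))
    (N : ℝ → ℝ → ℝ)
    (hN : ∀ t r, N t r = 8 * π * mu * r ^ 2 / (M0 * (r ^ 2 + lam t))) :
    ∀ t ≥ (0 : ℝ), ∀ r : ℝ, 0 < r → r ≤ R t → ∀ m : ℝ, 0 < m → m ≤ M0 →
      0 ≤ deriv (fun s => N s r) t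
        - r * deriv (fun σ => deriv (fun ρ => N t ρ) σ / σ) r
        - m / (2 * π * r) * deriv (fun ρ => N t ρ) r * N t r := by
  intro t ht r hr hrR m hm hmM0
  have hπ : (0:ℝ) < π := Real.pi_pos
  have hA1 : 1 < A := by
    have : mu * 8 * π / M0 = 8 * π * mu / M0 := by ring_nf
    rw [hA]; linarith [hthr, this]
  have hκ0 : 0 < κ := by
    rw [hκ]
    exact mul_pos (mul_pos (div_pos hM0 (mul_pos hmu0 hπ)) (by linarith)) (by linarith)
  have hlt : 0 < lam t := by rw [hlam]; nlinarith
  have hD : 0 < r ^ 2 + lam t := by positivity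
  have hDne : r ^ 2 + lam t ≠ 0 := ne_of_gt hD
  have hM0ne : M0 ≠ 0 := ne_of_gt hM0
  have hrne : r ≠ 0 := ne_of_gt hr
  have hπne : π ≠ 0 := ne_of_gt hπ
  -- time derivative
  have h1 : HasDerivAt (fun s => N s r)
      (-(8 * π * mu * r ^ 2 * (M0 * κ)) / (M0 * (r ^ 2 + lam t)) ^ 2) t := by
    have hf : (fun s => N s r) = fun s => 8 * π * mu * r ^ 2 / (M0 * (r ^ 2 + (lam0 + κ * s))) := by
      funext s; rw [hN, hlam]
    rw [hf]
    have hd : HasDerivAt (fun s : ℝ => M0 * (r ^ 2 + (lam0 + κ * s))) (M0 * κ) t := by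
      have : HasDerivAt (fun s : ℝ => κ * s) κ t := by
        simpa using (hasDerivAt_id t).const_mul κ
      simpa using ((this.const_add lam0).const_add (r ^ 2)).const_mul M0
    have hne : M0 * (r ^ 2 + (lam0 + κ * t)) ≠ 0 := by
      rw [← hlam]; positivity
    have := (hasDerivAt_const t (8 * π * mu * r ^ 2)).fun_div hd hne
    refine this.congr_deriv ?_
    rw [hlam]
    ring
  -- radial derivative (at every point)
  have h2 : ∀ σ : ℝ, HasDerivAt (fun ρ => N t ρ)
      (16 * π * mu * lam t * σ / (M0 * (σ ^ 2 + lam t) ^ 2)) σ := by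
    intro σ
    have hf : (fun ρ => N t ρ) = fun ρ => 8 * π * mu * ρ ^ 2 / (M0 * (ρ ^ 2 + lam t)) := by
      funext ρ; rw [hN]
    rw [hf]
    have hσD : (0:ℝ) < σ ^ 2 + lam t := by positivity
    have hu : HasDerivAt (fun ρ : ℝ => 8 * π * mu * ρ ^ 2) (8 * π * mu * (2 * σ)) σ := by
      simpa using (hasDerivAt_pow 2 σ).const_mul (8 * π * mu)
    have hv : HasDerivAt (fun ρ : ℝ => M0 * (ρ ^ 2 + lam t)) (M0 * (2 * σ)) σ := by
      simpa using ((hasDerivAt_pow 2 σ).add_const (lam t)).const_mul M0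
    have hvne : M0 * (σ ^ 2 + lam t) ≠ 0 := by positivity
    have := hu.fun_div hv hvne
    refine this.congr_deriv ?_
    field_simp
    ring
  have e2 : deriv (fun ρ => N t ρ) = fun σ => 16 * π * mu * lam t * σ / (M0 * (σ ^ 2 + lam t) ^ 2) :=
    funext fun σ => (h2 σ).deriv
  -- second radial derivative term
  have h3 : HasDerivAt (fun σ => deriv (fun ρ => N t ρ) σ / σ)
      (-(64 * π * mu * lam t * r) / (M0 * (r ^ 2 + lam t) ^ 3)) r := by
    rw [e2]
    have hu : HasDerivAt (fun σ : ℝ => 16 * π * mu * lam t * σ) (16 * π * mu * lam t) r := by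
      simpa using (hasDerivAt_id r).const_mul (16 * π * mu * lam t)
    have hw : HasDerivAt (fun σ : ℝ => M0 * (σ ^ 2 + lam t) ^ 2)
        (M0 * (2 * (r ^ 2 + lam t) * (2 * r))) r := by
      have h0 : HasDerivAt (fun σ : ℝ => σ ^ 2 + lam t) (2 * r) r := by
        simpa using (hasDerivAt_pow 2 r).add_const (lam t)
      have h1 : HasDerivAt (fun σ : ℝ => (σ ^ 2 + lam t) ^ 2)
          (2 * (r ^ 2 + lam t) ^ 1 * (2 * r)) r := h0.pow 2
      simpa [mul_comm, mul_assoc, mul_left_comm] using h1.const_mul M0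
    have hwne : M0 * (r ^ 2 + lam t) ^ 2 ≠ 0 := by positivity
    have hq := hu.fun_div hw hwne
    have := hq.fun_div (hasDerivAt_id' r) hrne
    refine this.congr_deriv ?_
    field_simp
    ring
  rw [h1.deriv, h3.deriv, (h2 r).deriv, hN]
  -- key inequality: κ (r² + λ) ≤ 8 (1-μ) λ
  have hrr : r ^ 2 ≤ lam t / (A - 1) := by
    have h0 := hrR
    rw [hR] at h0
    have hx : (0:ℝ) ≤ lam t / (A - 1) := div_nonneg hlt.le (by linarith)
    have hs := Real.sq_sqrt hx
    nlinarith [Real.sqrt_nonneg (lam t / (A - 1))]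
  have hr2' : (A - 1) * r ^ 2 ≤ lam t := by
    have := (le_div_iff₀ (by linarith : (0:ℝ) < A - 1)).mp hrr
    linarith
  have hMA : M0 * A = 8 * π * mu := by rw [hA]; field_simp
  have key : κ * (r ^ 2 + lam t) ≤ 8 * (1 - mu) * lam t := by
    have e : κ * (r ^ 2 + lam t) * (mu * π)
        = M0 * (1 - mu) * ((A - 1) * r ^ 2) + M0 * (1 - mu) * ((A - 1) * lam t) := by
      rw [hκ]; field_simp
    have e' : 8 * (1 - mu) * lam t * (mu * π)
        = M0 * (1 - mu) * lam t + M0 * (1 - mu) * ((A - 1) * lam t) := by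
      have : M0 * A * ((1 - mu) * lam t) = 8 * π * mu * ((1 - mu) * lam t) := by rw [hMA]
      linarith [this]
    have h' : M0 * (1 - mu) * ((A - 1) * r ^ 2) ≤ M0 * (1 - mu) * lam t :=
      mul_le_mul_of_nonneg_left hr2' (by nlinarith)
    have hmp : 0 < mu * π := mul_pos hmu0 hπ
    have := (mul_le_mul_iff_left₀ hmp).mp (by linarith : κ * (r ^ 2 + lam t) * (mu * π) ≤ 8 * (1 - mu) * lam t * (mu * π))
    exact this
  have hb : 0 ≤ 8 * lam t - κ * (r ^ 2 + lam t) - 8 * m * mu * lam t / M0 := by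
    have h5 : 8 * m * mu * lam t / M0 ≤ 8 * mu * lam t := by
      rw [div_le_iff₀ hM0]
      nlinarith [mul_le_mul_of_nonneg_right hmM0 (le_of_lt (mul_pos hmu0 hlt))]
    linarith
  have hfac : (0:ℝ) ≤ 8 * π * mu * r ^ 2 / (M0 * (r ^ 2 + lam t) ^ 3) := by positivity
  have hrw : -(8 * π * mu * r ^ 2 * (M0 * κ)) / (M0 * (r ^ 2 + lam t)) ^ 2
        - r * (-(64 * π * mu * lam t * r) / (M0 * (r ^ 2 + lam t) ^ 3))
        - m / (2 * π * r) * (16 * π * mu * lam t * r / (M0 * (r ^ 2 + lam t) ^ 2))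
          * (8 * π * mu * r ^ 2 / (M0 * (r ^ 2 + lam t)))
      = 8 * π * mu * r ^ 2 / (M0 * (r ^ 2 + lam t) ^ 3)
          * (8 * lam t - κ * (r ^ 2 + lam t) - 8 * m * mu * lam t / M0) := by
    field_simp
    ring
  rw [hrw]
  exact mul_nonneg hfac hb
end

section
/- Let M0 > 0, λ0 > 0 and μ₁ > 1, and define N₁(r) := 8π·μ₁·r²/(M0·(r² + λ0)) for r > 0. Then for every r > 0 and every real m with m ≥ M0, one has −r·(d/dr)( N₁'(r)/r ) − (m/(2π·r))·N₁'(r)·N₁(r) ≤ 0; that is, the time-independent function N₁ is a subsolution of the radial cumulated-mass equation whenever the time-dependent mass m(t) stays above M0. -/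
open Real

/-- The time-independent function `N₁(r) = 8πμ₁ r²/(M0 (r² + λ0))` with `μ₁ > 1`
is a subsolution of the radial cumulated-mass equation whenever the time-dependent
mass coefficient `m` satisfies `m ≥ M0`. -/
theorem subsolution_radial_cumulated_mass (M0 lam0 mu1 : ℝ)
    (hM0 : 0 < M0) (hlam0 : 0 < lam0) (hmu1 : 1 < mu1)
    (N1 : ℝ → ℝ)
    (hN1 : ∀ r, N1 r = 8 * π * mu1 * r ^ 2 / (M0 * (r ^ 2 + lam0))) :
    ∀ r > (0 : ℝ), ∀ m : ℝ, M0 ≤ m →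
      -(r * deriv (fun σ => deriv N1 σ / σ) r) - m / (2 * π * r) * deriv N1 r * N1 r ≤ 0 := by
  have hfun : N1 = fun r => 8 * π * mu1 * r ^ 2 / (M0 * (r ^ 2 + lam0)) := funext hN1
  subst hfun
  intro r hr m hm
  have hpi := Real.pi_pos
  -- first derivative
  have hderiv : ∀ σ : ℝ, HasDerivAt (fun r : ℝ => 8 * π * mu1 * r ^ 2 / (M0 * (r ^ 2 + lam0)))
      (16 * π * mu1 * lam0 * σ / (M0 * (σ ^ 2 + lam0) ^ 2)) σ := by
    intro σ
    have hden : M0 * (σ ^ 2 + lam0) ≠ 0 := by positivity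
    have h1 : HasDerivAt (fun r : ℝ => 8 * π * mu1 * r ^ 2) (8 * π * mu1 * (2 * σ)) σ := by
      simpa [mul_comm, mul_assoc] using ((hasDerivAt_pow 2 σ).const_mul (8 * π * mu1))
    have h2 : HasDerivAt (fun r : ℝ => M0 * (r ^ 2 + lam0)) (M0 * (2 * σ)) σ := by
      simpa using (((hasDerivAt_pow 2 σ).add_const lam0).const_mul M0)
    have h := h1.div h2 hden
    have heq : (8 * π * mu1 * (2 * σ) * (M0 * (σ ^ 2 + lam0)) -
        8 * π * mu1 * σ ^ 2 * (M0 * (2 * σ))) / (M0 * (σ ^ 2 + lam0)) ^ 2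
        = 16 * π * mu1 * lam0 * σ / (M0 * (σ ^ 2 + lam0) ^ 2) := by
      have h0 : (σ ^ 2 + lam0) ≠ 0 := by positivity
      field_simp
      ring
    rw [heq] at h
    exact h
  have hd1 : ∀ σ : ℝ, deriv (fun r : ℝ => 8 * π * mu1 * r ^ 2 / (M0 * (r ^ 2 + lam0))) σ
      = 16 * π * mu1 * lam0 * σ / (M0 * (σ ^ 2 + lam0) ^ 2) := fun σ => (hderiv σ).deriv
  -- the quotient function agrees near r with a nice function
  have hEq : (fun σ : ℝ => deriv (fun r : ℝ => 8 * π * mu1 * r ^ 2 / (M0 * (r ^ 2 + lam0))) σ / σ)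
      =ᶠ[nhds r] (fun σ : ℝ => 16 * π * mu1 * lam0 / (M0 * (σ ^ 2 + lam0) ^ 2)) := by
    filter_upwards [eventually_gt_nhds hr] with σ hσ
    have hσ0 : σ ≠ 0 := ne_of_gt hσ
    rw [hd1 σ]
    field_simp
  -- derivative of the nice function
  have hden2 : M0 * (r ^ 2 + lam0) ^ 2 ≠ 0 := by positivity
  have hv : HasDerivAt (fun σ : ℝ => M0 * (σ ^ 2 + lam0) ^ 2)
      (M0 * (2 * (r ^ 2 + lam0) * (2 * r))) r := by
    have h2 : HasDerivAt (fun σ : ℝ => (σ ^ 2 + lam0) ^ 2) (2 * (r ^ 2 + lam0) * (2 * r)) r := by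
      have hb : HasDerivAt (fun σ : ℝ => σ ^ 2 + lam0) (2 * r) r := by
        simpa using (hasDerivAt_pow 2 r).add_const lam0
      simpa [mul_comm, mul_assoc] using (hb.fun_pow 2)
    simpa [mul_assoc] using h2.const_mul M0
  have hnice : HasDerivAt (fun σ : ℝ => 16 * π * mu1 * lam0 / (M0 * (σ ^ 2 + lam0) ^ 2))
      ((0 * (M0 * (r ^ 2 + lam0) ^ 2) - 16 * π * mu1 * lam0 * (M0 * (2 * (r ^ 2 + lam0) * (2 * r))))
        / (M0 * (r ^ 2 + lam0) ^ 2) ^ 2) r :=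
    (hasDerivAt_const r (16 * π * mu1 * lam0)).div hv hden2
  have hd2 : deriv (fun σ : ℝ => deriv (fun r : ℝ => 8 * π * mu1 * r ^ 2 / (M0 * (r ^ 2 + lam0))) σ / σ) r
      = (0 * (M0 * (r ^ 2 + lam0) ^ 2) - 16 * π * mu1 * lam0 * (M0 * (2 * (r ^ 2 + lam0) * (2 * r))))
        / (M0 * (r ^ 2 + lam0) ^ 2) ^ 2 := by
    rw [hEq.deriv_eq]
    exact hnice.deriv
  rw [hd2, hd1]
  -- algebraic simplification
  have hr2 : (r ^ 2 + lam0) ≠ 0 := by positivity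
  have hkey : -(r * ((0 * (M0 * (r ^ 2 + lam0) ^ 2) -
        16 * π * mu1 * lam0 * (M0 * (2 * (r ^ 2 + lam0) * (2 * r))))
        / (M0 * (r ^ 2 + lam0) ^ 2) ^ 2)) -
      m / (2 * π * r) * (16 * π * mu1 * lam0 * r / (M0 * (r ^ 2 + lam0) ^ 2)) *
        (8 * π * mu1 * r ^ 2 / (M0 * (r ^ 2 + lam0)))
      = (64 * π * mu1 * lam0 * r ^ 2 / (M0 ^ 2 * (r ^ 2 + lam0) ^ 3)) * (M0 - m * mu1) := by
    field_simp
    ring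
  rw [hkey]
  apply mul_nonpos_of_nonneg_of_nonpos
  · positivity
  · have : M0 ≤ m * mu1 := by
      calc M0 ≤ m := hm
        _ = m * 1 := (mul_one m).symm
        _ ≤ m * mu1 := by
          apply mul_le_mul_of_nonneg_left (le_of_lt hmu1) (le_trans hM0.le hm)
    linarith
end

section
/- (Lower semicontinuity of the entropy.) Let (u_n) be a sequence of nonnegative Lebesgue-integrable functions on ℝ² and u a nonnegative Lebesgue-integrable function on ℝ² such that: (a) sup_n ∫_{ℝ²} |x|²·u_n(x) dx < ∞ and ∫_{ℝ²} |x|²·u(x) dx < ∞; (b) sup_n ∫_{ℝ²} u_n(x)·|log u_n(x)| dx < ∞; (c) for every bounded measurable g : ℝ² → ℝ, ∫_{ℝ²} g·u_n dx → ∫_{ℝ²} g·u dx as n → ∞. Then u·|log u| is Lebesgue-integrable on ℝ² and ∫_{ℝ²} u·log u dx ≤ liminf_{n→∞} ∫_{ℝ²} u_n·log u_n dx. -/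
open Real MeasureTheory Filter

lemma aux_exp_sub_exp_le {a b : ℝ} (h : a ≤ b) : exp b - exp a ≤ (b - a) * exp b := by
  have h1 : (a - b) + 1 ≤ exp (a - b) := Real.add_one_le_exp _
  have h2 : exp (a - b) * exp b = exp a := by rw [← Real.exp_add]; ring_nf
  nlinarith [Real.exp_pos b]

lemma aux_exp_sub_exp_ge {a b : ℝ} (h : a ≤ b) : (b - a) * exp a ≤ exp b - exp a := by
  have h1 : (b - a) + 1 ≤ exp (b - a) := Real.add_one_le_exp _
  have h2 : exp (b - a) * exp a = exp b := by rw [← Real.exp_add]; ring_nf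
  nlinarith [Real.exp_pos a]

lemma theta_mono_left {t s₁ s₂ : ℝ} (h : s₁ ≤ s₂) (ht : exp (s₂ - 1) ≤ t) :
    s₁ * t - exp (s₁ - 1) ≤ s₂ * t - exp (s₂ - 1) := by
  have := aux_exp_sub_exp_le (show s₁ - 1 ≤ s₂ - 1 by linarith)
  nlinarith

lemma theta_mono_right {t s₁ s₂ : ℝ} (h : s₁ ≤ s₂) (ht : t ≤ exp (s₁ - 1)) :
    s₂ * t - exp (s₂ - 1) ≤ s₁ * t - exp (s₁ - 1) := by
  have := aux_exp_sub_exp_ge (show s₁ - 1 ≤ s₂ - 1 by linarith)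
  nlinarith

lemma young_ineq {t s : ℝ} (ht : 0 ≤ t) : s * t - exp (s - 1) ≤ t * log t := by
  rcases eq_or_lt_of_le ht with h | h
  · simp [← h]; positivity
  · have hst : exp ((1 + log t) - 1) = t := by
      simp [Real.exp_log h]
    have key : s * t - exp (s - 1) ≤ (1 + log t) * t - exp ((1 + log t) - 1) := by
      rcases le_total s (1 + log t) with hs | hs
      · exact theta_mono_left hs (le_of_eq hst)
      · exact theta_mono_right hs (ge_of_eq hst)
    calc s * t - exp (s - 1) ≤ (1 + log t) * t - exp ((1 + log t) - 1) := key
    _ = t * log t := by rw [hst]; ring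

noncomputable def clampSeq (k : ℕ) (t : ℝ) : ℝ :=
  if t = 0 then -(k+1) else max (min (1 + Real.log t) (k+1)) (-(k+1))

lemma clampSeq_abs_le (k : ℕ) (t : ℝ) : |clampSeq k t| ≤ k + 1 := by
  unfold clampSeq
  split_ifs with h
  · rw [abs_neg, abs_of_nonneg (by positivity)]
  · rw [abs_le]
    constructor
    · exact le_max_right _ _
    · exact max_le (min_le_right _ _) (by linarith [Nat.cast_nonneg (α := ℝ) k])

lemma clampSeq_measurable (k : ℕ) : Measurable (clampSeq k) := by
  unfold clampSeq
  exact Measurable.ite (measurableSet_singleton 0) measurable_const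
    (((Real.measurable_log.const_add 1).min measurable_const).max measurable_const)

lemma clampSeq_theta_mono {t : ℝ} (ht : 0 ≤ t) {k k' : ℕ} (hk : k ≤ k') :
    clampSeq k t * t - exp (clampSeq k t - 1) ≤ clampSeq k' t * t - exp (clampSeq k' t - 1) := by
  have hkk : (k : ℝ) + 1 ≤ (k' : ℝ) + 1 := by exact_mod_cast by omega
  rcases eq_or_lt_of_le ht with h | h
  · simp only [clampSeq, ← h, if_pos rfl, mul_zero, zero_sub, if_true]
    have : exp (-((k':ℝ)+1) - 1) ≤ exp (-((k:ℝ)+1) - 1) := exp_le_exp.2 (by linarith)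
    linarith
  · have hne : t ≠ 0 := ne_of_gt h
    simp only [clampSeq, if_neg hne]
    set s := 1 + Real.log t with hs
    have hexps : exp (s - 1) = t := by simp [hs, Real.exp_log h]
    rcases le_total 0 s with hs0 | hs0
    · have e1 : ∀ m : ℕ, max (min s (m+1)) (-(m+1)) = min s (m+1) := by
        intro m
        apply max_eq_left
        have : (0:ℝ) ≤ min s ((m:ℝ)+1) := le_min hs0 (by positivity)
        linarith
      rw [e1 k, e1 k']
      apply theta_mono_left (le_min (min_le_left _ _) (le_trans (min_le_right _ _) hkk))
      rw [← hexps]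
      exact exp_le_exp.2 (by simp [min_le_left])
    · have e1 : ∀ m : ℕ, max (min s (m+1)) (-(m+1)) = max s (-(m+1)) := by
        intro m
        rw [min_eq_left (by linarith [Nat.cast_nonneg (α := ℝ) m] : s ≤ (m:ℝ)+1)]
      rw [e1 k, e1 k']
      apply theta_mono_right (max_le (le_max_left _ _) (le_trans (neg_le_neg hkk) (le_max_right _ _)))
      rw [← hexps]
      exact exp_le_exp.2 (by simp)

lemma clampSeq_theta_tendsto {t : ℝ} (ht : 0 ≤ t) :
    Filter.Tendsto (fun k : ℕ => clampSeq k t * t - exp (clampSeq k t - 1)) Filter.atTop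
      (nhds (t * Real.log t)) := by
  rcases eq_or_lt_of_le ht with h | h
  · simp only [clampSeq, ← h, if_pos rfl, Real.log_zero, mul_zero, zero_sub, if_true, zero_mul]
    have h1 : Filter.Tendsto (fun k : ℕ => ((k:ℝ)+1)+1) Filter.atTop Filter.atTop := by
      apply Filter.tendsto_atTop_add_const_right
      apply Filter.tendsto_atTop_add_const_right
      exact tendsto_natCast_atTop_atTop
    have h2 : Filter.Tendsto (fun k : ℕ => exp (-(((k:ℝ)+1)+1))) Filter.atTop (nhds 0) :=
      Real.tendsto_exp_atBot.comp (Filter.tendsto_neg_atBot_iff.mpr h1)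
    have h3 := h2.neg
    rw [neg_zero] at h3
    convert h3 using 2 with k
    ring_nf
  · have hne : t ≠ 0 := ne_of_gt h
    obtain ⟨K, hK⟩ := exists_nat_gt (|1 + Real.log t|)
    apply tendsto_atTop_of_eventually_const (i₀ := K)
    intro k hk
    have hb : |1 + Real.log t| ≤ (k:ℝ) + 1 := by
      have : (K:ℝ) ≤ k := by exact_mod_cast hk
      linarith
    rw [abs_le] at hb
    have hck : clampSeq k t = 1 + Real.log t := by
      simp only [clampSeq, if_neg hne]
      rw [min_eq_left hb.2, max_eq_left hb.1]
    rw [hck]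
    have hexps : exp ((1 + Real.log t) - 1) = t := by simp [Real.exp_log h]
    rw [hexps]; ring

lemma neg_entropy_bound {t r : ℝ} (ht : 0 ≤ t) (hr : 0 ≤ r) :
    -(t * Real.log t) ≤ r * t + 432 * (1+r)^(-3 : ℝ) := by
  have hp : (0:ℝ) < (1+r)^(3:ℕ) := by positivity
  have hG : (0:ℝ) < (1+r)^(-3 : ℝ) := Real.rpow_pos_of_pos (by linarith) _
  have hrw : (1+r)^(-3:ℝ) = ((1+r)^(3:ℕ))⁻¹ := by
    rw [← Real.rpow_natCast (1+r) 3, ← Real.rpow_neg (by linarith)]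
    norm_num
  have hGe : 2 * exp (-r/2) ≤ 432 * (1+r)^(-3:ℝ) := by
    have h6 : 1 + r ≤ 6 * exp (r/6) := by
      have := Real.add_one_le_exp (r/6)
      nlinarith
    have hcube : (1+r)^(3:ℕ) ≤ 216 * exp (r/2) := by
      have h1 : (0:ℝ) ≤ 1 + r := by linarith
      have h2 : exp (r/6) * exp (r/6) * exp (r/6) = exp (r/2) := by
        rw [← Real.exp_add, ← Real.exp_add]; ring_nf
      calc (1+r)^(3:ℕ) ≤ (6 * exp (r/6))^(3:ℕ) := by
            apply pow_le_pow_left₀ h1 h6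
      _ = 216 * exp (r/2) := by rw [← h2]; ring
    have he : exp (-r/2) * exp (r/2) = 1 := by
      rw [← Real.exp_add]; ring_nf; exact Real.exp_zero
    rw [hrw, show (432:ℝ) * ((1+r)^(3:ℕ))⁻¹ = 432 / (1+r)^(3:ℕ) by ring, le_div_iff₀ hp]
    nlinarith [Real.exp_pos (-r/2), Real.exp_pos (r/2)]
  rcases eq_or_lt_of_le ht with h | h
  · simp [← h]; positivity
  · rcases le_or_gt 1 t with h1 | h1
    · have : 0 ≤ Real.log t := Real.log_nonneg h1
      nlinarith
    · rcases le_or_gt (exp (-r)) t with h2 | h2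
      · have : -Real.log t ≤ r := by
          have := Real.log_le_log (Real.exp_pos _) h2
          rw [Real.log_exp] at this; linarith
        nlinarith
      · have hsq : -(t * Real.log t) ≤ 2 * Real.sqrt t := by
          have hlt : Real.log t = 2 * Real.log (Real.sqrt t) := by
            rw [Real.log_sqrt ht]; ring
          have hst : 0 < Real.sqrt t := Real.sqrt_pos.2 h
          have hinv : Real.log (Real.sqrt t)⁻¹ ≤ (Real.sqrt t)⁻¹ - 1 :=
            Real.log_le_sub_one_of_pos (by positivity)
          rw [Real.log_inv] at hinv
          have htsq : Real.sqrt t * Real.sqrt t = t := Real.mul_self_sqrt ht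
          have heq : -(t * Real.log t) = 2 * t * (-Real.log (Real.sqrt t)) := by rw [hlt]; ring
          rw [heq]
          have h3 : -Real.log (Real.sqrt t) ≤ (Real.sqrt t)⁻¹ := by linarith
          calc 2 * t * (-Real.log (Real.sqrt t)) ≤ 2 * t * (Real.sqrt t)⁻¹ := by nlinarith
          _ = 2 * Real.sqrt t := by
              field_simp
              linarith [htsq]
        have hs2 : Real.sqrt t ≤ exp (-r/2) := by
          rw [show (-r/2 : ℝ) = (-r)/2 by ring, Real.exp_half]
          exact Real.sqrt_le_sqrt (le_of_lt h2)
        nlinarith [mul_nonneg ht hr]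

/-- Lower semicontinuity of the entropy along a weakly-`L¹` convergent sequence
with uniformly bounded second moments and entropies. -/
theorem entropy_lower_semicontinuous
    (u : ℕ → EuclideanSpace ℝ (Fin 2) → ℝ) (v : EuclideanSpace ℝ (Fin 2) → ℝ)
    (hu_nonneg : ∀ n x, 0 ≤ u n x) (hv_nonneg : ∀ x, 0 ≤ v x)
    (hu_int : ∀ n, Integrable (u n)) (hv_int : Integrable v)
    (hu_m2 : ∀ n, Integrable (fun x => ‖x‖ ^ 2 * u n x))
    (hm2_bdd : ∃ C : ℝ, ∀ n, ∫ x, ‖x‖ ^ 2 * u n x ≤ C)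
    (hv_m2 : Integrable (fun x => ‖x‖ ^ 2 * v x))
    (hu_ent : ∀ n, Integrable (fun x => u n x * |Real.log (u n x)|))
    (hent_bdd : ∃ C : ℝ, ∀ n, ∫ x, u n x * |Real.log (u n x)| ≤ C)
    (hweak : ∀ g : EuclideanSpace ℝ (Fin 2) → ℝ, Measurable g → (∃ C : ℝ, ∀ x, |g x| ≤ C) →
      Filter.Tendsto (fun n => ∫ x, g x * u n x) Filter.atTop (nhds (∫ x, g x * v x))) :
    Integrable (fun x => v x * |Real.log (v x)|) ∧
      ∫ x, v x * Real.log (v x) ≤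
        Filter.liminf (fun n => ∫ x, u n x * Real.log (u n x)) Filter.atTop := by
  classical
  obtain ⟨M2, hM2⟩ := hm2_bdd
  obtain ⟨CE, hCE⟩ := hent_bdd
  -- measurable nonnegative representative of v
  set w : EuclideanSpace ℝ (Fin 2) → ℝ := fun x => max (hv_int.1.mk v x) 0 with hw_def
  have hw_meas : Measurable w :=
    (hv_int.1.stronglyMeasurable_mk.measurable).max measurable_const
  have hw_ae : v =ᵐ[volume] w := hv_int.1.ae_eq_mk.mono (fun x hx => by
    simp only [hw_def, ← hx, max_eq_left (hv_nonneg x)])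
  have hw_nonneg : ∀ x, 0 ≤ w x := fun x => le_max_right _ _
  have hw_int : Integrable w := hv_int.congr hw_ae
  have hw_m2 : Integrable (fun x => ‖x‖ ^ 2 * w x) :=
    hv_m2.congr (hw_ae.mono fun x hx => by simp only [hx])
  -- the integrable tail weight
  set G : EuclideanSpace ℝ (Fin 2) → ℝ := fun x => 432 * (1 + ‖x‖) ^ (-3 : ℝ) with hG_def
  have hG_int : Integrable G := by
    apply Integrable.const_mul
    apply integrable_one_add_norm
    rw [finrank_euclideanSpace]
    norm_num
  have hG_nonneg : ∀ x, 0 ≤ G x := fun x => by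
    have : (0:ℝ) < (1 + ‖x‖) ^ (-3 : ℝ) := Real.rpow_pos_of_pos (by positivity) _
    simp only [hG_def]; positivity
  have hG_meas : Measurable G :=
    (((measurable_norm).const_add 1).pow_const _).const_mul 432
  -- balls
  set B : ℕ → Set (EuclideanSpace ℝ (Fin 2)) := fun m => Metric.ball 0 (m+1) with hB_def
  have hBmeas : ∀ m, MeasurableSet (B m) := fun m => measurableSet_ball
  have hBmono : Monotone B := fun a b hab =>
    Metric.ball_subset_ball (by exact_mod_cast by omega : (a:ℝ)+1 ≤ (b:ℝ)+1)
  have hBfin : ∀ m, volume (B m) < ⊤ := fun m => measure_ball_lt_top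
  have hBunion : (⋃ m, B m) = Set.univ := by
    ext x
    simp only [Set.mem_iUnion, Set.mem_univ, iff_true, hB_def, Metric.mem_ball]
    obtain ⟨n, hn⟩ := exists_nat_gt (dist x 0)
    exact ⟨n, by linarith⟩
  have hBmem : ∀ x : EuclideanSpace ℝ (Fin 2), ∃ N : ℕ, ∀ m ≥ N, x ∈ B m := by
    intro x
    obtain ⟨N, hN⟩ := exists_nat_gt (dist x 0)
    refine ⟨N, fun m hm => ?_⟩
    have : (N:ℝ) ≤ m := by exact_mod_cast hm
    simp only [hB_def, Metric.mem_ball]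
    linarith
  -- truncated dual functions
  set gk : ℕ → EuclideanSpace ℝ (Fin 2) → ℝ := fun k x => clampSeq k (w x) with hgk_def
  have hgk_meas : ∀ k, Measurable (gk k) := fun k => (clampSeq_measurable k).comp hw_meas
  have hgk_bdd : ∀ k x, |gk k x| ≤ (k:ℝ)+1 := fun k x => clampSeq_abs_le k (w x)
  -- entropy integrands
  have hphi_int : ∀ n, Integrable (fun x => u n x * Real.log (u n x)) := by
    intro n
    apply (hu_ent n).mono'
    · exact ((hu_int n).1.aemeasurable.mul
        (Real.measurable_log.comp_aemeasurable (hu_int n).1.aemeasurable)).aestronglyMeasurable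
    · filter_upwards with x
      rw [Real.norm_eq_abs, abs_mul, abs_of_nonneg (hu_nonneg n x)]
  have hCE0 : 0 ≤ CE := by
    refine le_trans ?_ (hCE 0)
    exact integral_nonneg fun x => mul_nonneg (hu_nonneg 0 x) (abs_nonneg _)
  have habs_a : ∀ n, |∫ x, u n x * Real.log (u n x)| ≤ CE := by
    intro n
    have h0 : |∫ x, u n x * Real.log (u n x)| ≤ ∫ x, |u n x * Real.log (u n x)| := by
      have := norm_integral_le_integral_norm (μ := volume) (f := fun x => u n x * Real.log (u n x))
      simpa only [Real.norm_eq_abs] using this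
    refine le_trans h0 ?_
    refine le_trans (le_of_eq (integral_congr_ae (Filter.Eventually.of_forall fun x => ?_))) (hCE n)
    dsimp only
    rw [abs_mul, abs_of_nonneg (hu_nonneg n x)]
  set a : ℕ → ℝ := fun n => ∫ x, u n x * Real.log (u n x) with ha_def
  set L : ℝ := Filter.liminf a Filter.atTop with hL_def
  -- the key weak convergence machinery for indicator test sets
  have key : ∀ (S : Set (EuclideanSpace ℝ (Fin 2))), MeasurableSet S → volume S < ⊤ → ∀ k : ℕ,
      (∀ n, Integrable (S.indicator (fun y => gk k y * u n y - Real.exp (gk k y - 1)))) ∧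
      Integrable (S.indicator (fun y => gk k y * w y - Real.exp (gk k y - 1))) ∧
      Filter.Tendsto (fun n => ∫ x, S.indicator (fun y => gk k y * u n y - Real.exp (gk k y - 1)) x)
        Filter.atTop (nhds (∫ x, S.indicator (fun y => gk k y * w y - Real.exp (gk k y - 1)) x)) := by
    intro S hSm hSf k
    set g' : EuclideanSpace ℝ (Fin 2) → ℝ := S.indicator (gk k) with hg'_def
    have hg'meas : Measurable g' := (hgk_meas k).indicator hSm
    have hg'bdd : ∀ x, |g' x| ≤ (k:ℝ)+1 := by
      intro x
      by_cases h : x ∈ S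
      · rw [hg'_def, Set.indicator_of_mem h]; exact hgk_bdd k x
      · rw [hg'_def, Set.indicator_of_notMem h]; simp; positivity
    have hexpint : Integrable (S.indicator (fun y => Real.exp (gk k y - 1))) := by
      apply Integrable.mono'
        ((integrable_indicator_iff hSm).2
          ((integrableOn_const_iff (C := Real.exp ((k:ℝ)+1))).2 (Or.inr hSf)))
      · exact ((Real.measurable_exp.comp ((hgk_meas k).sub_const 1)).indicator hSm).aestronglyMeasurable
      · filter_upwards with x
        by_cases h : x ∈ S
        · rw [Set.indicator_of_mem h, Set.indicator_of_mem h, Real.norm_eq_abs,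
            abs_of_nonneg (Real.exp_nonneg _)]
          apply Real.exp_le_exp.2
          have := (abs_le.1 (hgk_bdd k x)).2
          linarith
        · rw [Set.indicator_of_notMem h, Set.indicator_of_notMem h]; simp
    have hmulint : ∀ (f : EuclideanSpace ℝ (Fin 2) → ℝ), Integrable f →
        Integrable (fun x => g' x * f x) := fun f hf =>
      hf.bdd_mul (c := (k:ℝ)+1) hg'meas.aestronglyMeasurable (Filter.Eventually.of_forall fun x => by
        rw [Real.norm_eq_abs]; exact hg'bdd x)
    have hsplit : ∀ (f : EuclideanSpace ℝ (Fin 2) → ℝ),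
        S.indicator (fun y => gk k y * f y - Real.exp (gk k y - 1)) =
        fun x => g' x * f x - S.indicator (fun y => Real.exp (gk k y - 1)) x := by
      intro f
      funext x
      by_cases h : x ∈ S
      · rw [Set.indicator_of_mem h, hg'_def, Set.indicator_of_mem h, Set.indicator_of_mem h]
      · rw [Set.indicator_of_notMem h, hg'_def, Set.indicator_of_notMem h,
          Set.indicator_of_notMem h]
        simp
    have hint_u : ∀ n, Integrable (S.indicator (fun y => gk k y * u n y - Real.exp (gk k y - 1))) := by
      intro n; rw [hsplit]; exact (hmulint _ (hu_int n)).sub hexpint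
    have hint_w : Integrable (S.indicator (fun y => gk k y * w y - Real.exp (gk k y - 1))) := by
      rw [hsplit]; exact (hmulint _ hw_int).sub hexpint
    refine ⟨hint_u, hint_w, ?_⟩
    have hb : ∀ (f : EuclideanSpace ℝ (Fin 2) → ℝ), Integrable f →
        ∫ x, S.indicator (fun y => gk k y * f y - Real.exp (gk k y - 1)) x =
        (∫ x, g' x * f x) - ∫ x, S.indicator (fun y => Real.exp (gk k y - 1)) x := by
      intro f hf
      rw [hsplit]
      exact integral_sub (hmulint f hf) hexpint
    have hw' := hweak g' hg'meas ⟨(k:ℝ)+1, hg'bdd⟩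
    have hvw : ∫ x, g' x * v x = ∫ x, g' x * w x :=
      integral_congr_ae (hw_ae.mono fun x hx => by simp only [hx])
    rw [hvw] at hw'
    have ht := hw'.sub_const (∫ x, S.indicator (fun y => Real.exp (gk k y - 1)) x)
    rw [hb w hw_int]
    exact Filter.Tendsto.congr (fun n => (hb (u n) (hu_int n)).symm) ht
  -- pointwise nonnegativity of u|log u|
  have hulogu_nonneg : ∀ n x, 0 ≤ u n x * |Real.log (u n x)| :=
    fun n x => mul_nonneg (hu_nonneg n x) (abs_nonneg _)
  -- Step A : entropy positive part control
  have stepA : ∀ j m : ℕ,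
      Integrable ((B m).indicator (fun x => max (gk j x * w x - Real.exp (gk j x - 1)) 0)) ∧
      ∫ x, (B m).indicator (fun x => max (gk j x * w x - Real.exp (gk j x - 1)) 0) x ≤ CE := by
    intro j m
    set θ : EuclideanSpace ℝ (Fin 2) → ℝ := fun x => gk j x * w x - Real.exp (gk j x - 1) with hθ_def
    have hθmeas : Measurable θ :=
      ((hgk_meas j).mul hw_meas).sub (Real.measurable_exp.comp ((hgk_meas j).sub_const 1))
    set T : Set (EuclideanSpace ℝ (Fin 2)) := B m ∩ {x | 0 < θ x} with hT_def
    have hTmeas : MeasurableSet T := (hBmeas m).inter (measurableSet_lt measurable_const hθmeas)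
    have hTfin : volume T < ⊤ :=
      lt_of_le_of_lt (measure_mono Set.inter_subset_left) (hBfin m)
    obtain ⟨hint_u, hint_w, htend⟩ := key T hTmeas hTfin j
    -- the indicator of T of θ equals indicator of B m of max θ 0
    have heq : T.indicator θ = (B m).indicator (fun x => max (θ x) 0) := by
      funext x
      by_cases h1 : x ∈ B m
      · by_cases h2 : 0 < θ x
        · rw [Set.indicator_of_mem (Set.mem_inter h1 h2), Set.indicator_of_mem h1, max_eq_left h2.le]
        · rw [Set.indicator_of_notMem (fun h => h2 h.2), Set.indicator_of_mem h1,
            max_eq_right (not_lt.1 h2)]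
      · rw [Set.indicator_of_notMem (fun h => h1 h.1), Set.indicator_of_notMem h1]
    -- each n-integral is at most CE
    have hbound : ∀ n, ∫ x, T.indicator (fun y => gk j y * u n y - Real.exp (gk j y - 1)) x ≤ CE := by
      intro n
      refine le_trans (integral_mono (hint_u n) (hu_ent n) ?_) (hCE n)
      intro x
      by_cases h : x ∈ T
      · rw [Set.indicator_of_mem h]
        calc gk j x * u n x - Real.exp (gk j x - 1)
            ≤ u n x * Real.log (u n x) := young_ineq (hu_nonneg n x)
        _ ≤ u n x * |Real.log (u n x)| :=
            mul_le_mul_of_nonneg_left (le_abs_self _) (hu_nonneg n x)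
      · rw [Set.indicator_of_notMem h]
        exact hulogu_nonneg n x
    have hle : ∫ x, T.indicator θ x ≤ CE :=
      le_of_tendsto htend (Filter.Eventually.of_forall hbound)
    constructor
    · rw [← heq]; exact hint_w
    · rw [← heq]; exact hle
  -- positive part of entropy of w is integrable
  have hψ_int : Integrable (fun x => max (w x * Real.log (w x)) 0) := by
    set ψ : EuclideanSpace ℝ (Fin 2) → ℝ := fun x => max (w x * Real.log (w x)) 0 with hψ_def
    have hψmeas : Measurable ψ :=
      (hw_meas.mul (Real.measurable_log.comp hw_meas)).max measurable_const
    set F : ℕ → EuclideanSpace ℝ (Fin 2) → ℝ := fun j =>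
      (B j).indicator (fun x => max (gk j x * w x - Real.exp (gk j x - 1)) 0) with hF_def
    have hFmeas : ∀ j, Measurable (F j) := fun j =>
      ((((hgk_meas j).mul hw_meas).sub
        (Real.measurable_exp.comp ((hgk_meas j).sub_const 1))).max measurable_const).indicator
        (hBmeas j)
    have hFnonneg : ∀ j x, 0 ≤ F j x := fun j x =>
      Set.indicator_nonneg (fun y _ => le_max_right _ _) x
    have hFmono : ∀ x, Monotone (fun j => F j x) := by
      intro x j j' hj
      by_cases h : x ∈ B j
      · rw [hF_def]
        simp only
        rw [Set.indicator_of_mem h, Set.indicator_of_mem (hBmono hj h)]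
        exact max_le_max (clampSeq_theta_mono (hw_nonneg x) hj) le_rfl
      · rw [hF_def]
        simp only
        rw [Set.indicator_of_notMem h]
        exact hFnonneg j' x
    have hFtend : ∀ x, Filter.Tendsto (fun j => F j x) Filter.atTop (nhds (ψ x)) := by
      intro x
      obtain ⟨N, hN⟩ := hBmem x
      have h1 : Filter.Tendsto (fun j : ℕ => max (gk j x * w x - Real.exp (gk j x - 1)) 0)
          Filter.atTop (nhds (max (w x * Real.log (w x)) 0)) :=
        (clampSeq_theta_tendsto (hw_nonneg x)).max tendsto_const_nhds
      apply h1.congr'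
      filter_upwards [Filter.eventually_ge_atTop N] with j hj
      rw [hF_def]
      simp only
      rw [Set.indicator_of_mem (hN j hj)]
    have hl : ∀ j, ∫⁻ x, ENNReal.ofReal (F j x) ≤ ENNReal.ofReal CE := by
      intro j
      rw [← ofReal_integral_eq_lintegral_ofReal (stepA j j).1
        (Filter.Eventually.of_forall fun x => hFnonneg j x)]
      exact ENNReal.ofReal_le_ofReal (stepA j j).2
    have hmct := lintegral_tendsto_of_tendsto_of_monotone (μ := volume)
      (f := fun j x => ENNReal.ofReal (F j x)) (F := fun x => ENNReal.ofReal (ψ x))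
      (fun j => ((hFmeas j).ennreal_ofReal).aemeasurable)
      (Filter.Eventually.of_forall fun x j j' hj => ENNReal.ofReal_le_ofReal (hFmono x hj))
      (Filter.Eventually.of_forall fun x => ENNReal.tendsto_ofReal (hFtend x))
    have hfin : ∫⁻ x, ENNReal.ofReal (ψ x) ≤ ENNReal.ofReal CE :=
      le_of_tendsto hmct (Filter.Eventually.of_forall hl)
    refine ⟨hψmeas.aestronglyMeasurable, ?_⟩
    have hψnn : 0 ≤ᵐ[volume] ψ := Filter.Eventually.of_forall (fun x => le_max_right _ _)
    exact (hasFiniteIntegral_iff_ofReal hψnn).2 (lt_of_le_of_lt hfin ENNReal.ofReal_lt_top)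
  -- negative part of entropy of w is integrable
  have hneg_int : Integrable (fun x => max (-(w x * Real.log (w x))) 0) := by
    apply Integrable.mono' ((hw_int.add hw_m2).add hG_int)
    · exact ((hw_meas.mul (Real.measurable_log.comp hw_meas)).neg.max
        measurable_const).aestronglyMeasurable
    · filter_upwards with x
      simp only [Pi.add_apply]
      rw [Real.norm_eq_abs, abs_of_nonneg (le_max_right _ _)]
      apply max_le
      · calc -(w x * Real.log (w x)) ≤ ‖x‖ * w x + G x :=
            neg_entropy_bound (hw_nonneg x) (norm_nonneg x)
        _ ≤ (w x + ‖x‖^2 * w x) + G x := by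
            have h1 : ‖x‖ * w x ≤ (1 + ‖x‖^2) * w x := by
              apply mul_le_mul_of_nonneg_right _ (hw_nonneg x)
              nlinarith [norm_nonneg x]
            nlinarith
      · have h1 := hw_nonneg x
        have h2 := hG_nonneg x
        have h3 : 0 ≤ ‖x‖^2 * w x := mul_nonneg (by positivity) h1
        linarith
  -- entropy integrand of w is integrable
  have heqfun : ∀ x, max (w x * Real.log (w x)) 0 + max (-(w x * Real.log (w x))) 0
      = w x * |Real.log (w x)| := by
    intro x
    rw [show w x * |Real.log (w x)| = |w x * Real.log (w x)| by
      rw [abs_mul, abs_of_nonneg (hw_nonneg x)]]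
    rcases le_total 0 (w x * Real.log (w x)) with h | h
    · rw [max_eq_left h, max_eq_right (by linarith), add_zero, abs_of_nonneg h]
    · rw [max_eq_right h, max_eq_left (by linarith), zero_add, abs_of_nonpos h]
  have hwlogw_abs_int : Integrable (fun x => w x * |Real.log (w x)|) :=
    (hψ_int.add hneg_int).congr (Filter.Eventually.of_forall (fun x => heqfun x))
  have hvlogv_abs_int : Integrable (fun x => v x * |Real.log (v x)|) :=
    hwlogw_abs_int.congr (hw_ae.symm.mono fun x hx => by dsimp only; rw [hx])
  have hwlogw_int : Integrable (fun x => w x * Real.log (w x)) := by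
    apply hwlogw_abs_int.mono'
    · exact (hw_meas.mul (Real.measurable_log.comp hw_meas)).aestronglyMeasurable
    · filter_upwards with x
      rw [Real.norm_eq_abs, abs_mul, abs_of_nonneg (hw_nonneg x)]
  refine ⟨hvlogv_abs_int, ?_⟩
  -- Step B : liminf inequality
  set τ : ℕ → ℝ := fun m => ∫ x, ((B m)ᶜ.indicator G) x with hτ_def
  have hτ_eq : ∀ m, τ m = (∫ x, G x) - ∫ x in B m, G x := by
    intro m
    have := integral_add_compl (hBmeas m) hG_int
    rw [hτ_def]
    simp only
    rw [integral_indicator (hBmeas m).compl]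
    linarith
  have hτ_to : Filter.Tendsto τ Filter.atTop (nhds 0) := by
    have h1 : Filter.Tendsto (fun m => ∫ x in B m, G x) Filter.atTop
        (nhds (∫ x in ⋃ m, B m, G x)) :=
      tendsto_setIntegral_of_monotone hBmeas hBmono (hG_int.integrableOn)
    rw [hBunion] at h1
    rw [MeasureTheory.Measure.restrict_univ] at h1
    have h2 := (tendsto_const_nhds (x := ∫ x, G x) (f := Filter.atTop (α := ℕ))).sub h1
    rw [sub_self] at h2
    apply h2.congr
    intro m
    rw [hτ_eq m]
  set ε : ℕ → ℝ := fun m => M2 / (m+1) + τ m with hε_def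
  have hε_to : Filter.Tendsto ε Filter.atTop (nhds 0) := by
    have h1 : Filter.Tendsto (fun m : ℕ => M2 / ((m:ℝ)+1)) Filter.atTop (nhds 0) := by
      have := (tendsto_const_div_atTop_nhds_zero_nat M2).comp
        (Filter.tendsto_add_atTop_nat 1)
      apply this.congr
      intro m
      simp only [Function.comp]
      push_cast
      ring
    have := h1.add hτ_to
    rw [add_zero] at this
    exact this
  -- the per-(k,m) estimate
  have stepB1 : ∀ k m : ℕ,
      ∫ x, (B m).indicator (fun x => gk k x * w x - Real.exp (gk k x - 1)) x ≤ L + ε m := by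
    intro k m
    obtain ⟨hint_u, hint_w, htend⟩ := key (B m) (hBmeas m) (hBfin m) k
    set b : ℕ → ℝ := fun n =>
      ∫ x, (B m).indicator (fun y => gk k y * u n y - Real.exp (gk k y - 1)) x with hb_def
    have hm1pos : (0:ℝ) < (m:ℝ)+1 := by positivity
    -- per-n bound
    have hper : ∀ n, b n ≤ a n + ε m := by
      intro n
      have hRint : Integrable (fun x => u n x * Real.log (u n x) +
          ((B m)ᶜ.indicator (fun x => ‖x‖^2 * u n x / ((m:ℝ)+1) + G x)) x) := by
        apply (hphi_int n).add
        apply Integrable.mono' (((hu_m2 n).div_const ((m:ℝ)+1)).add hG_int)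
        · exact ((((hu_m2 n).div_const ((m:ℝ)+1)).add hG_int).1.indicator (hBmeas m).compl)
        · filter_upwards with x
          have h1 : 0 ≤ ‖x‖^2 * u n x / ((m:ℝ)+1) + G x := by
            have := hG_nonneg x
            have : 0 ≤ ‖x‖^2 * u n x / ((m:ℝ)+1) :=
              div_nonneg (mul_nonneg (by positivity) (hu_nonneg n x)) hm1pos.le
            linarith [hG_nonneg x]
          simp only [Pi.add_apply]
          by_cases h : x ∈ (B m)ᶜ
          · rw [Set.indicator_of_mem h, Real.norm_eq_abs, abs_of_nonneg h1]
          · rw [Set.indicator_of_notMem h, norm_zero]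
            exact h1
      have hptwise : ∀ x, (B m).indicator (fun y => gk k y * u n y - Real.exp (gk k y - 1)) x
          ≤ u n x * Real.log (u n x) +
            ((B m)ᶜ.indicator (fun x => ‖x‖^2 * u n x / ((m:ℝ)+1) + G x)) x := by
        intro x
        by_cases h : x ∈ B m
        · rw [Set.indicator_of_mem h, Set.indicator_of_notMem (by simpa using h)]
          rw [add_zero]
          exact young_ineq (hu_nonneg n x)
        · rw [Set.indicator_of_notMem h, Set.indicator_of_mem (by simpa using h)]
          have hxnorm : (m:ℝ)+1 ≤ ‖x‖ := by
            have : ¬ dist x 0 < (m:ℝ)+1 := by simpa [hB_def, Metric.mem_ball] using h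
            rw [dist_zero_right] at this
            linarith [not_lt.1 this]
          have hneb : -(u n x * Real.log (u n x)) ≤ ‖x‖ * u n x + G x :=
            neg_entropy_bound (hu_nonneg n x) (norm_nonneg x)
          have hx2 : ‖x‖ * u n x ≤ ‖x‖^2 * u n x / ((m:ℝ)+1) := by
            rw [div_eq_mul_inv, sq]
            rw [show ‖x‖ * ‖x‖ * u n x * ((m:ℝ)+1)⁻¹ = ‖x‖ * u n x * (‖x‖ * ((m:ℝ)+1)⁻¹) by ring]
            have h5 : (1:ℝ) ≤ ‖x‖ * ((m:ℝ)+1)⁻¹ := by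
              rw [← div_eq_mul_inv, le_div_iff₀ hm1pos]
              linarith
            nlinarith [mul_nonneg (norm_nonneg x) (hu_nonneg n x)]
          have : 0 ≤ u n x * Real.log (u n x) + (‖x‖^2 * u n x / ((m:ℝ)+1) + G x) := by
            nlinarith
          linarith
      have h1 : b n ≤ ∫ x, (u n x * Real.log (u n x) +
          ((B m)ᶜ.indicator (fun x => ‖x‖^2 * u n x / ((m:ℝ)+1) + G x)) x) :=
        integral_mono (hint_u n) hRint hptwise
      have h2 : ∫ x, (u n x * Real.log (u n x) +
          ((B m)ᶜ.indicator (fun x => ‖x‖^2 * u n x / ((m:ℝ)+1) + G x)) x)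
          = a n + ∫ x, ((B m)ᶜ.indicator (fun x => ‖x‖^2 * u n x / ((m:ℝ)+1) + G x)) x :=
        integral_add (hphi_int n) (by
          have := hRint
          exact (integrable_add_iff_integrable_right (hphi_int n)).1 this)
      have h3 : ∫ x, ((B m)ᶜ.indicator (fun x => ‖x‖^2 * u n x / ((m:ℝ)+1) + G x)) x
          ≤ M2 / ((m:ℝ)+1) + τ m := by
        have hsum : ((B m)ᶜ.indicator (fun x => ‖x‖^2 * u n x / ((m:ℝ)+1) + G x))
            = fun x => ((B m)ᶜ.indicator (fun x => ‖x‖^2 * u n x / ((m:ℝ)+1))) x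
              + ((B m)ᶜ.indicator G) x := by
          funext x
          by_cases h : x ∈ (B m)ᶜ
          · rw [Set.indicator_of_mem h, Set.indicator_of_mem h, Set.indicator_of_mem h]
          · rw [Set.indicator_of_notMem h, Set.indicator_of_notMem h,
              Set.indicator_of_notMem h, add_zero]
        rw [hsum]
        have hi1 : Integrable ((B m)ᶜ.indicator
            (fun x => ‖x‖^2 * u n x / ((m:ℝ)+1))) :=
          ((hu_m2 n).div_const ((m:ℝ)+1)).indicator (hBmeas m).compl
        have hi2 : Integrable ((B m)ᶜ.indicator G) := hG_int.indicator (hBmeas m).compl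
        rw [integral_add hi1 hi2]
        have hA : ∫ x, ((B m)ᶜ.indicator (fun x => ‖x‖^2 * u n x / ((m:ℝ)+1))) x
            ≤ M2 / ((m:ℝ)+1) := by
          have hle1 : ∫ x, ((B m)ᶜ.indicator (fun x => ‖x‖^2 * u n x / ((m:ℝ)+1))) x
              ≤ ∫ x, ‖x‖^2 * u n x / ((m:ℝ)+1) := by
            apply integral_mono hi1 ((hu_m2 n).div_const ((m:ℝ)+1))
            intro x
            apply Set.indicator_le_self' 
            intro y _
            exact div_nonneg (mul_nonneg (by positivity) (hu_nonneg n y)) hm1pos.le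
          rw [integral_div] at hle1
          refine le_trans hle1 ?_
          gcongr
          exact hM2 n
        linarith
      rw [hε_def]
      simp only
      linarith
    -- pass to the liminf
    have htend' := htend.sub_const (ε m)
    have hlim1 : Filter.liminf (fun n => b n - ε m) Filter.atTop
        = (∫ x, (B m).indicator (fun y => gk k y * w y - Real.exp (gk k y - 1)) x) - ε m :=
      htend'.liminf_eq
    have hlim2 : Filter.liminf (fun n => b n - ε m) Filter.atTop ≤ L := by
      rw [hL_def]
      apply Filter.liminf_le_liminf
      · filter_upwards with n
        linarith [hper n]
      · exact htend'.isBoundedUnder_ge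
      · exact (Filter.isBoundedUnder_of ⟨CE, fun n => (abs_le.1 (habs_a n)).2⟩).isCoboundedUnder_ge
    linarith [hlim1 ▸ hlim2]
  -- let k → ∞ via monotone convergence
  have stepB2 : ∀ m : ℕ,
      ∫ x, (B m).indicator (fun x => w x * Real.log (w x)) x ≤ L + ε m := by
    intro m
    have hmct := integral_tendsto_of_tendsto_of_monotone
      (f := fun k => (B m).indicator (fun x => gk k x * w x - Real.exp (gk k x - 1)))
      (F := (B m).indicator (fun x => w x * Real.log (w x)))
      (fun k => ((key (B m) (hBmeas m) (hBfin m) k).2.1))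
      (hwlogw_int.indicator (hBmeas m))
      (Filter.Eventually.of_forall (fun x => by
        intro k k' hk
        dsimp only
        by_cases h : x ∈ B m
        · rw [Set.indicator_of_mem h, Set.indicator_of_mem h]
          exact clampSeq_theta_mono (hw_nonneg x) hk
        · rw [Set.indicator_of_notMem h, Set.indicator_of_notMem h]))
      (Filter.Eventually.of_forall (fun x => by
        by_cases h : x ∈ B m
        · simp only [Set.indicator_of_mem h]
          exact clampSeq_theta_tendsto (hw_nonneg x)
        · simp only [Set.indicator_of_notMem h]
          exact tendsto_const_nhds))
    exact le_of_tendsto hmct (Filter.Eventually.of_forall fun k => stepB1 k m)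
  -- let m → ∞
  have stepB3 : Filter.Tendsto (fun m => ∫ x, (B m).indicator (fun x => w x * Real.log (w x)) x)
      Filter.atTop (nhds (∫ x, w x * Real.log (w x))) := by
    have h1 : Filter.Tendsto (fun m => ∫ x in B m, w x * Real.log (w x)) Filter.atTop
        (nhds (∫ x in ⋃ m, B m, w x * Real.log (w x))) :=
      tendsto_setIntegral_of_monotone hBmeas hBmono (hwlogw_int.integrableOn)
    rw [hBunion, MeasureTheory.Measure.restrict_univ] at h1
    apply h1.congr
    intro m
    rw [integral_indicator (hBmeas m)]
  have hfinal : ∫ x, w x * Real.log (w x) ≤ L := by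
    have h1 := stepB3.sub hε_to
    rw [sub_zero] at h1
    apply le_of_tendsto h1
    filter_upwards with m
    linarith [stepB2 m]
  have hvw2 : ∫ x, v x * Real.log (v x) = ∫ x, w x * Real.log (w x) :=
    integral_congr_ae (hw_ae.mono fun x hx => by simp only [hx])
  rw [hvw2]
  exact hfinal
end
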